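/- arXiv:1906.09970 — 3 statements merged into one kernel-verified Lean document; each statement's English description precedes it below -/
import Mathlib

section
/- For a K-user degraded Gaussian BC with channel gains satisfying h_1^2 ≤ h_2^2 ≤ ... ≤ h_K^2, if for each k the rate satisfies ρ_k = C(h_k^2 P_k / (1 + h_k^2 Σ_{j=k+1}^K P_j)) where C(x) = (1/2)log₂(1+x), then the total power satisfies Σ_{k=1}^K P_k = Σ_{k=1}^K ((2^{2ρ_k} - 1)/h_k^2) · Π_{j=1}^{k-1} 2^{2ρ_j}. -/
open Finset

/-- Capacity function `C(x) = (1/2)·log₂(1+x)`. -/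
noncomputable def gaussCap (x : ℝ) : ℝ := (1/2) * Real.logb 2 (1 + x)

/-- Power inversion for the degraded Gaussian BC: if the rates are the
capacities with successive interference cancellation, the total power has the
stated closed form. -/
theorem stmt0 (K : ℕ) (h P ρ : ℕ → ℝ)
    (hh : ∀ k, 0 < h k) (hP : ∀ k, 0 ≤ P k)
    (hmono : ∀ j k, j ≤ k → (h j) ^ 2 ≤ (h k) ^ 2)
    (hρ : ∀ k < K, ρ k =
      gaussCap ((h k) ^ 2 * P k / (1 + (h k) ^ 2 * ∑ j ∈ Finset.Ico (k+1) K, P j))) :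
    ∑ k ∈ Finset.range K, P k =
      ∑ k ∈ Finset.range K,
        (((2:ℝ) ^ (2 * ρ k) - 1) / (h k) ^ 2) * ∏ j ∈ Finset.range k, (2:ℝ) ^ (2 * ρ j) := by
  have hS : ∀ k, 0 ≤ ∑ j ∈ Finset.Ico (k+1) K, P j :=
    fun k => Finset.sum_nonneg fun j _ => hP j
  have hden : ∀ k, 0 < 1 + (h k)^2 * ∑ j ∈ Finset.Ico (k+1) K, P j := by
    intro k
    have h1 := hS k
    have h2 := hh k
    positivity
  have key : ∀ k < K, (2:ℝ)^(2*ρ k)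
      = 1 + (h k)^2 * P k / (1 + (h k)^2 * ∑ j ∈ Finset.Ico (k+1) K, P j) := by
    intro k hk
    set x := (h k)^2 * P k / (1 + (h k)^2 * ∑ j ∈ Finset.Ico (k+1) K, P j) with hxdef
    have hx : 0 < 1 + x := by
      have h1 := hden k
      have h2 := hP k
      have h3 := hh k
      positivity
    rw [hρ k hk]
    unfold gaussCap
    rw [show (2:ℝ) * (1/2 * Real.logb 2 (1+x)) = Real.logb 2 (1+x) from by ring]
    exact Real.rpow_logb two_pos (by norm_num) hx
  have main : ∀ d k, k + d = K →
      ∑ m ∈ Finset.Ico k K, (((2:ℝ)^(2*ρ m) - 1)/(h m)^2) * ∏ j ∈ Finset.range m, (2:ℝ)^(2*ρ j)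
      = (∏ j ∈ Finset.range k, (2:ℝ)^(2*ρ j)) * ∑ m ∈ Finset.Ico k K, P m := by
    intro d
    induction d with
    | zero =>
      intro k hk
      have : k = K := by omega
      subst this
      simp
    | succ d ih =>
      intro k hk
      have hkK : k < K := by omega
      rw [Finset.sum_eq_sum_Ico_succ_bot hkK, Finset.sum_eq_sum_Ico_succ_bot hkK (f := P),
        ih (k+1) (by omega), Finset.prod_range_succ, key k hkK]
      have hb := (hden k).ne'
      have hhk := (hh k).ne'
      field_simp
      ring
  have := main K 0 (by omega)
  simp only [Finset.range_eq_Ico] at *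
  simpa using this.symm
end

section
/- Fix N ≥ K and k ≤ N_e = min{N,K}. The set 𝔇_d of demand vectors with distinct first N_e entries can be partitioned into |𝔇_d|/k groups of size k such that within each group, for any two distinct members d^{t1}, d^{t2}, the k-th entry of d^{t1} lies among the first k-1 entries of d^{t2} and vice versa. In particular, k divides |𝔇_d| = C(N,N_e)·N_e!·N^{K-N_e}. -/
open Finset
open scoped Classical

/-- Cyclic shift on the first `k` coordinates of `Fin K`. -/
def cyc (K k : ℕ) (hK : 0 < K) (hkK : k ≤ K) : Fin K → Fin K := fun i =>
  if h : (i : ℕ) + 1 < k then ⟨(i : ℕ) + 1, lt_of_lt_of_le h hkK⟩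
  else if (i : ℕ) + 1 = k then ⟨0, hK⟩ else i

/-- The set `𝔇_d` of demand vectors whose first `N_e = min{N,K}` entries are
pairwise distinct can be partitioned into blocks of size `k` such that within
each block, for any two distinct members the `k`-th entry of one lies among
the first `k-1` entries of the other; in particular `k ∣ |𝔇_d|`. -/
theorem stmt11 (N K k : ℕ) (hNK : K ≤ N) (hK : 1 ≤ K)
    (hk2 : 2 ≤ k) (hkNe : k ≤ min N K) :
    ∃ G : Finset (Finset (Fin K → Fin N)),
      (∀ B ∈ G, B.card = k) ∧
      (∀ B ∈ G, B ⊆ Finset.univ.filter (fun d : Fin K → Fin N =>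
        ∀ i j : Fin K, (i : ℕ) < min N K → (j : ℕ) < min N K → d i = d j → i = j)) ∧
      (∀ d ∈ Finset.univ.filter (fun d : Fin K → Fin N =>
        ∀ i j : Fin K, (i : ℕ) < min N K → (j : ℕ) < min N K → d i = d j → i = j),
        ∃! B, B ∈ G ∧ d ∈ B) ∧
      (∀ B ∈ G, ∀ d1 ∈ B, ∀ d2 ∈ B, d1 ≠ d2 →
        (∃ i : Fin K, (i : ℕ) < k - 1 ∧
          d2 i = d1 ⟨k - 1, by omega⟩) ∧
        (∃ i : Fin K, (i : ℕ) < k - 1 ∧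
          d1 i = d2 ⟨k - 1, by omega⟩)) ∧
      k ∣ (Finset.univ.filter (fun d : Fin K → Fin N =>
        ∀ i j : Fin K, (i : ℕ) < min N K → (j : ℕ) < min N K → d i = d j → i = j)).card := by
  have hkK : k ≤ K := le_trans hkNe (min_le_right N K)
  have hmin : min N K = K := min_eq_right hNK
  set 𝔇 := Finset.univ.filter (fun d : Fin K → Fin N =>
    ∀ i j : Fin K, (i : ℕ) < min N K → (j : ℕ) < min N K → d i = d j → i = j) with h𝔇
  have hmem : ∀ d : Fin K → Fin N, d ∈ 𝔇 ↔ Function.Injective d := by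
    intro d
    simp only [h𝔇, mem_filter, mem_univ, true_and, hmin]
    constructor
    · intro h i j hij; exact h i j i.isLt j.isLt hij
    · intro h i j _ _ hij; exact h hij
  set c := cyc K k hK hkK with hc
  -- value lemmas
  have hc_lt : ∀ i : Fin K, (i : ℕ) < k → (c i : ℕ) = ((i : ℕ) + 1) % k := by
    intro i hi
    simp only [hc, cyc]
    by_cases h1 : (i : ℕ) + 1 < k
    · rw [dif_pos h1]
      exact (Nat.mod_eq_of_lt h1).symm
    · have h2 : (i : ℕ) + 1 = k := by omega
      rw [dif_neg h1, if_pos h2, h2, Nat.mod_self]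
  have hc_ge : ∀ i : Fin K, k ≤ (i : ℕ) → c i = i := by
    intro i hi
    simp only [hc, cyc]
    rw [dif_neg (by omega), if_neg (by omega)]
  have hiter_lt : ∀ (m : ℕ) (i : Fin K), (i : ℕ) < k →
      ((c^[m]) i : ℕ) = ((i : ℕ) + m) % k := by
    intro m
    induction m with
    | zero => intro i hi; simpa using (Nat.mod_eq_of_lt hi).symm
    | succ m ih =>
      intro i hi
      rw [Function.iterate_succ_apply']
      have hr := ih i hi
      have hrlt : ((c^[m]) i : ℕ) < k := by
        rw [hr]; exact Nat.mod_lt _ (by omega)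
      rw [hc_lt _ hrlt, hr]
      have h3 : (i : ℕ) + (m + 1) = ((i : ℕ) + m) + 1 := by ring
      rw [h3, Nat.add_mod ((i : ℕ) + m) 1 k, Nat.mod_eq_of_lt (show 1 < k by omega)]
  have hckk : ∀ i : Fin K, (c^[k]) i = i := by
    intro i
    by_cases hi : (i : ℕ) < k
    · apply Fin.ext
      rw [hiter_lt k i hi, Nat.add_mod_right, Nat.mod_eq_of_lt hi]
    · exact Function.iterate_fixed (hc_ge i (by omega)) k
  have hmod : ∀ (n : ℕ) (i : Fin K), (c^[n]) i = (c^[n % k]) i := by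
    intro n i
    conv_lhs => rw [← Nat.mod_add_div n k]
    rw [Function.iterate_add_apply, Function.iterate_mul]
    rw [Function.iterate_fixed (hckk i) (n / k)]
  have hcinj : Function.Injective c := by
    have hli : Function.LeftInverse (c^[k - 1]) c := by
      intro i
      have h1 : (c^[k]) i = i := hckk i
      rwa [show k = (k - 1) + 1 by omega, Function.iterate_succ_apply] at h1
    exact hli.injective
  have hiterinj : ∀ m : ℕ, Function.Injective (c^[m]) := fun m => hcinj.iterate m
  -- the orbit (block) of a demand vector
  set B : (Fin K → Fin N) → Finset (Fin K → Fin N) :=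
    fun d => (Finset.range k).image (fun m => d ∘ (c^[m])) with hB
  have hBmem : ∀ d d' : Fin K → Fin N, d' ∈ B d ↔ ∃ m, m < k ∧ d ∘ (c^[m]) = d' := by
    intro d d'
    simp [hB, Finset.mem_image, Finset.mem_range]
  have hdself : ∀ d : Fin K → Fin N, d ∈ B d := by
    intro d
    exact (hBmem d d).mpr ⟨0, by omega, rfl⟩
  have htrans : ∀ d d1 : Fin K → Fin N, d1 ∈ B d → B d1 ⊆ B d := by
    intro d d1 h1 x hx
    obtain ⟨m, hm, hdm⟩ := (hBmem d d1).mp h1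
    obtain ⟨j, hj, hdj⟩ := (hBmem d1 x).mp hx
    refine (hBmem d x).mpr ⟨(m + j) % k, Nat.mod_lt _ (by omega), ?_⟩
    funext i
    have : x i = d ((c^[m + j]) i) := by
      rw [← hdj, ← hdm, Function.comp_apply, Function.comp_apply,
        ← Function.iterate_add_apply]
    rw [this, hmod (m + j) i]
    rfl
  have hsymm : ∀ d d1 : Fin K → Fin N, d1 ∈ B d → d ∈ B d1 := by
    intro d d1 h1
    obtain ⟨m, hm, hdm⟩ := (hBmem d d1).mp h1
    refine (hBmem d1 d).mpr ⟨(k - m) % k, Nat.mod_lt _ (by omega), ?_⟩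
    funext i
    rw [Function.comp_apply, ← hmod (k - m) i, ← hdm, Function.comp_apply,
      ← Function.iterate_add_apply, show m + (k - m) = k by omega, hckk i]
  have hBeq : ∀ d d1 : Fin K → Fin N, d1 ∈ B d → B d1 = B d := by
    intro d d1 h1
    exact Finset.Subset.antisymm (htrans d d1 h1) (htrans d1 d (hsymm d d1 h1))
  have hBcard : ∀ d : Fin K → Fin N, Function.Injective d → (B d).card = k := by
    intro d hd
    rw [hB]
    rw [Finset.card_image_of_injOn, Finset.card_range]
    intro m hm m' hm' hmm
    simp only [Finset.mem_coe, Finset.mem_range] at hm hm'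
    have h0 : ((⟨0, by omega⟩ : Fin K) : ℕ) < k := by simp; omega
    have := congrFun hmm (⟨0, by omega⟩ : Fin K)
    simp only [Function.comp_apply] at this
    have h2 := hd this
    have h3 := congrArg (Fin.val) h2
    rw [hiter_lt m _ h0, hiter_lt m' _ h0] at h3
    simpa [Nat.mod_eq_of_lt hm, Nat.mod_eq_of_lt hm'] using h3
  have hBsub : ∀ d ∈ 𝔇, B d ⊆ 𝔇 := by
    intro d hd x hx
    obtain ⟨m, hm, hdm⟩ := (hBmem d x).mp hx
    rw [hmem]
    rw [← hdm]
    exact ((hmem d).mp hd).comp (hiterinj m)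
  -- crossing key lemma
  have key : ∀ (d1 d2 : Fin K → Fin N) (m : ℕ), 1 ≤ m → m < k → d2 = d1 ∘ (c^[m]) →
      ∃ i : Fin K, (i : ℕ) < k - 1 ∧ d2 i = d1 ⟨k - 1, by omega⟩ := by
    intro d1 d2 m hm1 hmk h
    refine ⟨⟨k - 1 - m, by omega⟩, by simp; omega, ?_⟩
    rw [h, Function.comp_apply]
    congr 1
    apply Fin.ext
    rw [hiter_lt m _ (by simp; omega)]
    simp only
    rw [show k - 1 - m + m = k - 1 by omega, Nat.mod_eq_of_lt (by omega)]
  refine ⟨𝔇.image B, ?_, ?_, ?_, ?_, ?_⟩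
  · intro Bl hBl
    obtain ⟨d, hd, rfl⟩ := Finset.mem_image.mp hBl
    exact hBcard d ((hmem d).mp hd)
  · intro Bl hBl
    obtain ⟨d, hd, rfl⟩ := Finset.mem_image.mp hBl
    exact hBsub d hd
  · intro d hd
    refine ⟨B d, ⟨Finset.mem_image_of_mem B hd, hdself d⟩, ?_⟩
    rintro Bl ⟨hBl, hdBl⟩
    obtain ⟨d', _, rfl⟩ := Finset.mem_image.mp hBl
    exact (hBeq d' d hdBl).symm
  · intro Bl hBl d1 hd1 d2 hd2 hne
    obtain ⟨d, hd, rfl⟩ := Finset.mem_image.mp hBl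
    obtain ⟨m1, hm1, hdm1⟩ := (hBmem d d1).mp hd1
    obtain ⟨m2, hm2, hdm2⟩ := (hBmem d d2).mp hd2
    have hmne : m1 ≠ m2 := by
      rintro rfl; exact hne (hdm1.symm.trans hdm2)
    -- express d2 = d1 ∘ c^[m] with 1 ≤ m < k
    have main : ∃ m, 1 ≤ m ∧ m < k ∧ d2 = d1 ∘ (c^[m]) := by
      rcases lt_or_gt_of_ne hmne with hlt | hgt
      · refine ⟨m2 - m1, by omega, by omega, ?_⟩
        funext i
        rw [← hdm2, ← hdm1]
        simp only [Function.comp_apply]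
        rw [← Function.iterate_add_apply, show m1 + (m2 - m1) = m2 by omega]
      · refine ⟨k + m2 - m1, by omega, by omega, ?_⟩
        funext i
        rw [← hdm2, ← hdm1]
        simp only [Function.comp_apply]
        rw [← Function.iterate_add_apply, show m1 + (k + m2 - m1) = k + m2 by omega,
          hmod (k + m2) i, Nat.add_mod_left, Nat.mod_eq_of_lt hm2]
    obtain ⟨m, hm1', hmk', hmeq⟩ := main
    have hback : d1 = d2 ∘ (c^[k - m]) := by
      funext i
      rw [hmeq]
      simp only [Function.comp_apply]
      rw [← Function.iterate_add_apply, show m + (k - m) = k by omega, hckk i]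
    exact ⟨key d1 d2 m hm1' hmk' hmeq, key d2 d1 (k - m) (by omega) (by omega) hback⟩
  · -- divisibility
    have hpart : 𝔇 = (𝔇.image B).biUnion id := by
      apply Finset.Subset.antisymm
      · intro d hd
        exact Finset.mem_biUnion.mpr ⟨B d, Finset.mem_image_of_mem B hd, hdself d⟩
      · intro x hx
        obtain ⟨Bl, hBl, hxBl⟩ := Finset.mem_biUnion.mp hx
        obtain ⟨d, hd, rfl⟩ := Finset.mem_image.mp hBl
        exact hBsub d hd hxBl
    rw [hpart, Finset.card_biUnion]
    · apply Finset.dvd_sum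
      intro Bl hBl
      obtain ⟨d, hd, rfl⟩ := Finset.mem_image.mp hBl
      rw [id, hBcard d ((hmem d).mp hd)]
    · intro Bl1 h1 Bl2 h2 hne12
      obtain ⟨da, hda, rfl⟩ := Finset.mem_image.mp h1
      obtain ⟨db, hdb, rfl⟩ := Finset.mem_image.mp h2
      simp only [Function.onFun, id]
      rw [Finset.disjoint_left]
      intro x hxa hxb
      exact hne12 ((hBeq da x hxa).symm.trans (hBeq db x hxb))
end

section
/- (Delivery rate in the single-demand subroutine) For leader set 𝒦 ⊆ [K] with e_k = |{k' ∈ 𝒦 : k' > k}|, the per-user rates γ̂_k given by γ̂_k = C(K-k, t)/C(K, t) for k ∈ 𝒦 and γ̂_k = (C(K-k, t) − C(K-k-e_k, t))/C(K, t) for k ∉ 𝒦 (rates normalized, single part of unit rate, integer cache parameter t) sum to Σ_{k=1}^K γ̂_k = (C(K, t+1) − C(K−|𝒦|, t+1))/C(K, t). -/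
open Finset
open scoped Classical

private lemma rank_sum (f : ℕ → ℕ) (S : Finset ℕ) :
    ∑ k ∈ S, f ((S.filter (fun k' => k < k')).card) = ∑ j ∈ Finset.range S.card, f j := by
  induction S using Finset.strongInduction with
  | _ S ih =>
    rcases S.eq_empty_or_nonempty with rfl | hne
    · simp
    · set m := S.min' hne with hm
      have hmS : m ∈ S := S.min'_mem hne
      have herase : S.filter (fun k' => m < k') = S.erase m := by
        ext x
        simp only [mem_filter, mem_erase]
        constructor
        · rintro ⟨hx, hlt⟩; exact ⟨hlt.ne', hx⟩
        · rintro ⟨hne', hx⟩; exact ⟨hx, lt_of_le_of_ne (S.min'_le x hx) (Ne.symm hne')⟩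
      have hkey : ∀ k ∈ S.erase m,
          f ((S.filter (fun k' => k < k')).card)
            = f (((S.erase m).filter (fun k' => k < k')).card) := by
        intro k hk
        congr 2
        ext x
        simp only [mem_filter, mem_erase]
        have hmk : m ≤ k := S.min'_le k (mem_of_mem_erase hk)
        constructor
        · rintro ⟨hx, hlt⟩
          exact ⟨⟨by omega, hx⟩, hlt⟩
        · rintro ⟨⟨_, hx⟩, hlt⟩; exact ⟨hx, hlt⟩
      have hc1 : 1 ≤ S.card := Finset.card_pos.mpr hne
      have hcard : (S.erase m).card = S.card - 1 := Finset.card_erase_of_mem hmS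
      calc ∑ k ∈ S, f ((S.filter (fun k' => k < k')).card)
          = f ((S.filter (fun k' => m < k')).card)
            + ∑ k ∈ S.erase m, f ((S.filter (fun k' => k < k')).card) :=
            (Finset.add_sum_erase S _ hmS).symm
        _ = f (S.card - 1)
            + ∑ k ∈ S.erase m, f (((S.erase m).filter (fun k' => k < k')).card) := by
            rw [herase, hcard, Finset.sum_congr rfl hkey]
        _ = f (S.card - 1) + ∑ j ∈ Finset.range (S.card - 1), f j := by
            rw [ih (S.erase m) (Finset.erase_ssubset hmS), hcard]
        _ = ∑ j ∈ Finset.range S.card, f j := by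
            have h : S.card = (S.card - 1) + 1 := by omega
            conv_rhs => rw [h, Finset.sum_range_succ]
            exact add_comm _ _

private lemma hockey (n t : ℕ) :
    ∑ j ∈ Finset.range n, Nat.choose j t = Nat.choose n (t + 1) := by
  induction n with
  | zero => simp
  | succ n ih =>
    rw [Finset.sum_range_succ, ih, Nat.add_comm]
    exact (Nat.choose_succ_succ n t).symm

/-- Delivery rate of the single-demand subroutine: for a nonempty leader set
`𝒦 ⊆ [K]` with `e_k = |{k' ∈ 𝒦 : k' > k}|`, the per-user rates
`γ̂_k = C(K-k,t)/C(K,t)` for `k ∈ 𝒦` and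
`γ̂_k = (C(K-k,t) − C(K-k-e_k,t))/C(K,t)` for `k ∉ 𝒦` sum to
`(C(K,t+1) − C(K−|𝒦|,t+1))/C(K,t)`. -/
theorem stmt18 (K t : ℕ) (hK : 1 ≤ K) (htK : t ≤ K)
    (𝒦 : Finset ℕ) (h𝒦 : 𝒦 ⊆ Finset.Icc 1 K) (hne : 𝒦.Nonempty) :
    ∑ k ∈ Finset.Icc 1 K,
        (if k ∈ 𝒦 then (Nat.choose (K - k) t : ℝ) / (Nat.choose K t : ℝ)
          else ((Nat.choose (K - k) t : ℝ)
            - (Nat.choose (K - k - (𝒦.filter (fun k' => k < k')).card) t : ℝ))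
              / (Nat.choose K t : ℝ))
      = ((Nat.choose K (t + 1) : ℝ) - (Nat.choose (K - 𝒦.card) (t + 1) : ℝ))
          / (Nat.choose K t : ℝ) := by
  set S : Finset ℕ := Finset.Icc 1 K with hS
  set C : Finset ℕ := S \ 𝒦 with hCdef
  have hcardS : S.card = K := by simp [hS, Nat.card_Icc]
  have hcardC : C.card = K - 𝒦.card := by
    rw [hCdef, Finset.card_sdiff_of_subset h𝒦, hcardS]
  -- filter card facts
  have hfiltS : ∀ k ∈ S, (S.filter (fun k' => k < k')).card = K - k := by
    intro k hk
    have : S.filter (fun k' => k < k') = Finset.Icc (k + 1) K := by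
      ext x
      simp only [hS, mem_filter, Finset.mem_Icc]
      omega
    rw [this, Nat.card_Icc]
    omega
  have hfiltC : ∀ k ∈ C, (C.filter (fun k' => k < k')).card
      = K - k - (𝒦.filter (fun k' => k < k')).card := by
    intro k hk
    have hkS : k ∈ S := Finset.mem_sdiff.mp hk |>.1
    have hunion : S.filter (fun k' => k < k')
        = 𝒦.filter (fun k' => k < k') ∪ C.filter (fun k' => k < k') := by
      ext x
      simp only [mem_filter, Finset.mem_union, hCdef, Finset.mem_sdiff]
      constructor
      · rintro ⟨hx, hlt⟩
        by_cases hx𝒦 : x ∈ 𝒦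
        · exact Or.inl ⟨hx𝒦, hlt⟩
        · exact Or.inr ⟨⟨hx, hx𝒦⟩, hlt⟩
      · rintro (⟨hx, hlt⟩ | ⟨⟨hx, _⟩, hlt⟩)
        · exact ⟨h𝒦 hx, hlt⟩
        · exact ⟨hx, hlt⟩
    have hdisj : Disjoint (𝒦.filter (fun k' => k < k')) (C.filter (fun k' => k < k')) := by
      apply Finset.disjoint_filter_filter
      rw [hCdef]
      exact disjoint_sdiff_self_right
    have := hfiltS k hkS
    rw [hunion, Finset.card_union_of_disjoint hdisj] at this
    omega
  -- nat identities
  have hsum1 : ∑ k ∈ S, Nat.choose (K - k) t = Nat.choose K (t + 1) := by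
    calc ∑ k ∈ S, Nat.choose (K - k) t
        = ∑ k ∈ S, Nat.choose ((S.filter (fun k' => k < k')).card) t :=
          Finset.sum_congr rfl (fun k hk => by rw [hfiltS k hk])
      _ = ∑ j ∈ Finset.range S.card, Nat.choose j t := rank_sum (fun j => Nat.choose j t) S
      _ = Nat.choose K (t + 1) := by rw [hcardS, hockey]
  have hsum2 : ∑ k ∈ C, Nat.choose (K - k - (𝒦.filter (fun k' => k < k')).card) t
      = Nat.choose (K - 𝒦.card) (t + 1) := by
    calc ∑ k ∈ C, Nat.choose (K - k - (𝒦.filter (fun k' => k < k')).card) t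
        = ∑ k ∈ C, Nat.choose ((C.filter (fun k' => k < k')).card) t :=
          Finset.sum_congr rfl (fun k hk => by rw [hfiltC k hk])
      _ = ∑ j ∈ Finset.range C.card, Nat.choose j t := rank_sum (fun j => Nat.choose j t) C
      _ = Nat.choose (K - 𝒦.card) (t + 1) := by rw [hcardC, hockey]
  -- now real arithmetic
  have hstep : ∀ k ∈ S,
      (if k ∈ 𝒦 then (Nat.choose (K - k) t : ℝ) / (Nat.choose K t : ℝ)
        else ((Nat.choose (K - k) t : ℝ)
          - (Nat.choose (K - k - (𝒦.filter (fun k' => k < k')).card) t : ℝ))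
            / (Nat.choose K t : ℝ))
      = (Nat.choose (K - k) t : ℝ) / (Nat.choose K t : ℝ)
        - (if k ∉ 𝒦 then (Nat.choose (K - k - (𝒦.filter (fun k' => k < k')).card) t : ℝ)
            / (Nat.choose K t : ℝ) else 0) := by
    intro k hk
    by_cases h : k ∈ 𝒦 <;> simp [h] <;> ring
  rw [Finset.sum_congr rfl hstep, Finset.sum_sub_distrib, Finset.sum_ite, Finset.sum_const_zero,
    add_zero]
  have hfilt : S.filter (fun k => k ∉ 𝒦) = C := by
    rw [hCdef, Finset.sdiff_eq_filter]
  rw [hfilt, ← Finset.sum_div, ← Finset.sum_div]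
  push_cast [← hsum1, ← hsum2]
  ring
end
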